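/- arXiv:0704.2453 — 7 statements merged into one kernel-verified Lean document; each statement's English description precedes it below -/
import Mathlib

section
/- Let x₀ be a positive integer with distinct prime factorization x₀ = q₁^β₁ ⋯ q_r^β_r, and let q be a prime with q ∤ x₀ such that q - 1 divides x₀ / (q₁ ⋯ q_r). Then y₀ = x₀ · q / (q - 1) is an integer distinct from x₀ and satisfies φ(y₀) = φ(x₀). -/
lemma totient_mul_of_primes_dvd : ∀ a b : ℕ, (∀ p : ℕ, p.Prime → p ∣ a → p ∣ b) →
    Nat.totient (a * b) = a * Nat.totient b := by
  intro a
  induction a using Nat.strong_induction_on with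
  | _ a ih =>
    intro b hab
    rcases Nat.eq_zero_or_pos a with rfl | ha
    · simp
    rcases eq_or_ne a 1 with rfl | hne
    · simp
    obtain ⟨p, hp, hpa⟩ := Nat.exists_prime_and_dvd hne
    obtain ⟨a', rfl⟩ := hpa
    have hpb : p ∣ b := hab p hp (Dvd.intro a' rfl)
    have h2 := hp.two_le
    have ha0 : 0 < a' := by
      rcases Nat.eq_zero_or_pos a' with rfl | h
      · simp at ha
      · exact h
    have ha' : a' < p * a' := by nlinarith
    rw [mul_assoc, Nat.totient_mul_of_prime_of_dvd hp (hpb.mul_left a'),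
      ih a' ha' b (fun r hr hra => hab r hr (hra.mul_left p)), mul_assoc]

theorem stmt_3 (x₀ q : ℕ) (hx : 0 < x₀) (hq : q.Prime) (hqx : ¬ q ∣ x₀)
    (hdvd : (q - 1) ∣ x₀ / ∏ p ∈ x₀.primeFactors, p) :
    (q - 1) ∣ x₀ * q ∧ x₀ * q / (q - 1) ≠ x₀ ∧
      Nat.totient (x₀ * q / (q - 1)) = Nat.totient x₀ := by
  have hrad : (∏ p ∈ x₀.primeFactors, p) ∣ x₀ := Nat.prod_primeFactors_dvd x₀
  have hq1x : (q - 1) ∣ x₀ := hdvd.trans (Nat.div_dvd_of_dvd hrad)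
  obtain ⟨m, hm⟩ := hq1x
  have hq1 : 0 < q - 1 := by have := hq.two_le; omega
  have hm0 : 0 < m := by
    rcases Nat.eq_zero_or_pos m with rfl | h
    · simp [hm] at hx
    · exact h
  -- every prime of q-1 divides m
  have hprimes : ∀ p : ℕ, p.Prime → p ∣ (q - 1) → p ∣ m := by
    intro p hp hpq
    have hpx : p ∣ x₀ := hpq.trans ⟨m, hm⟩
    have hpR : p ∣ ∏ r ∈ x₀.primeFactors, r :=
      Finset.dvd_prod_of_mem _ (Nat.mem_primeFactors.mpr ⟨hp, hpx, hx.ne'⟩)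
    -- p * (q-1) ∣ x₀ since p ∣ R, (q-1) ∣ x₀/R
    obtain ⟨k, hk⟩ := hdvd
    have hxeq : x₀ = (∏ r ∈ x₀.primeFactors, r) * ((q - 1) * k) := by
      rw [← hk, Nat.mul_div_cancel' hrad]
    obtain ⟨s, hs⟩ := hpR
    have : (q - 1) * (p * (s * k)) = (q - 1) * m := by
      rw [← hm, hxeq, hs]; ring
    have hmeq : m = p * (s * k) := by
      have := Nat.eq_of_mul_eq_mul_left hq1 this
      omega
    exact ⟨s * k, hmeq⟩
  have hdiv : x₀ * q / (q - 1) = m * q := by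
    rw [hm, mul_assoc, mul_comm (q-1) (m*q), Nat.mul_div_cancel _ hq1]
  refine ⟨⟨m * q, by rw [hm]; ring⟩, ?_, ?_⟩
  · rw [hdiv]
    intro h
    exact hqx (h ▸ Dvd.intro_left m rfl)
  · rw [hdiv]
    have hqm : ¬ q ∣ m := fun h => hqx (h.trans ⟨q - 1, by rw [hm]; ring⟩)
    rw [mul_comm m q, Nat.totient_mul_of_prime_of_not_dvd hq hqm, hm,
      totient_mul_of_primes_dvd (q - 1) m hprimes, mul_comm]
end

section
/- If x₀ ≥ 2 is a positive integer such that φ(x) = φ(x₀) has x₀ as its unique positive solution, then 36 divides x₀ (i.e., 2²·3² ∣ x₀). -/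
theorem stmt_7 (x₀ : ℕ) (hx : 2 ≤ x₀)
    (huniq : ∀ y : ℕ, 0 < y → Nat.totient y = Nat.totient x₀ → y = x₀) :
    2 ^ 2 * 3 ^ 2 ∣ x₀ := by
  have hx0 : 0 < x₀ := by omega
  -- Step 1: 2 ∣ x₀
  have h2 : 2 ∣ x₀ := by
    by_contra h
    have hcop : Nat.Coprime 2 x₀ := (Nat.Prime.coprime_iff_not_dvd Nat.prime_two).mpr h
    have hφ : Nat.totient (2 * x₀) = Nat.totient x₀ := by
      rw [Nat.totient_mul hcop, Nat.totient_two, one_mul]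
    have := huniq (2 * x₀) (by omega) hφ
    omega
  -- Step 2: 4 ∣ x₀
  have h4 : 4 ∣ x₀ := by
    by_contra h
    obtain ⟨k, hk⟩ := h2
    have hkodd : ¬ 2 ∣ k := by omega
    have hcop : Nat.Coprime 2 k := (Nat.Prime.coprime_iff_not_dvd Nat.prime_two).mpr hkodd
    have hφ : Nat.totient k = Nat.totient x₀ := by
      rw [hk, Nat.totient_mul hcop, Nat.totient_two, one_mul]
    have := huniq k (by omega) hφ
    omega
  -- Step 3: 3 ∣ x₀
  have h3 : 3 ∣ x₀ := by
    by_contra h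
    obtain ⟨k, hk⟩ : 2 ∣ x₀ := h2
    have h2k : 2 ∣ k := by omega
    have h3k : ¬ 3 ∣ k := fun hd => h (hk ▸ hd.mul_left 2)
    have hcop3 : Nat.Coprime 3 k := (Nat.Prime.coprime_iff_not_dvd Nat.prime_three).mpr h3k
    have hφ : Nat.totient (3 * k) = Nat.totient x₀ := by
      rw [hk, Nat.totient_mul hcop3, Nat.totient_mul_of_prime_of_dvd Nat.prime_two h2k]
      norm_num [Nat.totient_prime Nat.prime_three]
    have := huniq (3 * k) (by omega) hφ
    omega
  -- Step 4: 9 ∣ x₀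
  have h9 : 9 ∣ x₀ := by
    by_contra h
    obtain ⟨m, hm⟩ : 3 ∣ x₀ := h3
    have h3m : ¬ 3 ∣ m := fun hd => h (by obtain ⟨t, ht⟩ := hd; exact ⟨t, by omega⟩)
    have h2m : 2 ∣ m := by
      have hcop : Nat.Coprime 4 3 := by decide
      have : 4 ∣ m := (Nat.Coprime.dvd_of_dvd_mul_left hcop) (hm ▸ h4)
      omega
    have hcop3 : Nat.Coprime 3 m := (Nat.Prime.coprime_iff_not_dvd Nat.prime_three).mpr h3m
    have hφ : Nat.totient (2 * m) = Nat.totient x₀ := by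
      rw [hm, Nat.totient_mul hcop3, Nat.totient_mul_of_prime_of_dvd Nat.prime_two h2m]
      norm_num [Nat.totient_prime Nat.prime_three]
    have := huniq (2 * m) (by omega) hφ
    omega
  have hcop : Nat.Coprime (2 ^ 2) (3 ^ 2) := by decide
  exact Nat.Coprime.mul_dvd_of_dvd_of_dvd hcop (by norm_num; exact h4) (by norm_num; exact h9)
end

section
/- If x₀ ≥ 2 is a positive integer such that φ(x) = φ(x₀) has x₀ as its unique positive solution, then 2²·3²·7² divides x₀. -/
private lemma tot_p_not_dvd {p n : ℕ} (hp : p.Prime) (h : ¬ p ∣ n) :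
    (p * n).totient = (p - 1) * n.totient := by
  rw [Nat.totient_mul ((Nat.Prime.coprime_iff_not_dvd hp).mpr h), Nat.totient_prime hp]

private lemma tot6 {n : ℕ} (h2 : 2 ∣ n) (h3 : 3 ∣ n) :
    (6 * n).totient = 6 * n.totient := by
  have e : 6 * n = 2 * (3 * n) := by ring
  rw [e, Nat.totient_mul_of_prime_of_dvd Nat.prime_two (Dvd.dvd.mul_left h2 3),
    Nat.totient_mul_of_prime_of_dvd Nat.prime_three h3]
  ring

theorem stmt_8 (x₀ : ℕ) (hx : 2 ≤ x₀)
    (huniq : ∀ y : ℕ, 0 < y → Nat.totient y = Nat.totient x₀ → y = x₀) :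
    2 ^ 2 * 3 ^ 2 * 7 ^ 2 ∣ x₀ := by
  have hpos : 0 < x₀ := by omega
  -- Step 1: 2 ∣ x₀
  have h2 : 2 ∣ x₀ := by
    by_contra h
    have heq : (2 * x₀).totient = x₀.totient := by
      rw [tot_p_not_dvd Nat.prime_two h]; simp
    have := huniq (2 * x₀) (by omega) heq
    omega
  -- Step 2: 4 ∣ x₀
  have h4 : 4 ∣ x₀ := by
    by_contra h4
    obtain ⟨m, hm⟩ := h2
    have h2m : ¬ 2 ∣ m := fun ⟨k, hk⟩ => h4 ⟨k, by omega⟩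
    have heq : m.totient = x₀.totient := by
      rw [hm, tot_p_not_dvd Nat.prime_two h2m]; simp
    have := huniq m (by omega) heq
    omega
  -- Step 3: 3 ∣ x₀
  have h3 : 3 ∣ x₀ := by
    by_contra h3
    obtain ⟨k, hk⟩ := h4
    set n := 2 * k with hn
    have hx₀ : x₀ = 2 * n := by omega
    have h2n : 2 ∣ n := ⟨k, rfl⟩
    have h3n : ¬ 3 ∣ n := fun hd => h3 (by rw [hx₀]; exact Dvd.dvd.mul_left hd 2)
    have heq : (3 * n).totient = x₀.totient := by
      rw [hx₀, tot_p_not_dvd Nat.prime_three h3n,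
        Nat.totient_mul_of_prime_of_dvd Nat.prime_two h2n]
    have := huniq (3 * n) (by omega) heq
    omega
  -- Step 4: 9 ∣ x₀
  have h9 : 9 ∣ x₀ := by
    by_contra h9
    obtain ⟨m, hm⟩ := h3
    have h3m : ¬ 3 ∣ m := fun ⟨k, hk⟩ => h9 ⟨k, by omega⟩
    have h2m : 2 ∣ m := by
      rcases h4 with ⟨k, hk⟩; omega
    have heq : (2 * m).totient = x₀.totient := by
      rw [hm, tot_p_not_dvd Nat.prime_three h3m,
        Nat.totient_mul_of_prime_of_dvd Nat.prime_two h2m]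
    have := huniq (2 * m) (by omega) heq
    omega
  -- 36 ∣ x₀
  have h36 : 36 ∣ x₀ := (Nat.Coprime.mul_dvd_of_dvd_of_dvd (by decide) h4 h9 : 4 * 9 ∣ x₀)
  -- Step 5: 7 ∣ x₀
  have h7 : 7 ∣ x₀ := by
    by_contra h7
    obtain ⟨k, hk⟩ := h36
    set n := 6 * k with hn
    have hx₀ : x₀ = 6 * n := by omega
    have h2n : 2 ∣ n := ⟨3 * k, by omega⟩
    have h3n : 3 ∣ n := ⟨2 * k, by omega⟩
    have h7n : ¬ 7 ∣ n := fun hd => h7 (by rw [hx₀]; exact Dvd.dvd.mul_left hd 6)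
    have heq : (7 * n).totient = x₀.totient := by
      rw [hx₀, tot_p_not_dvd (by norm_num) h7n, tot6 h2n h3n]
    have := huniq (7 * n) (by omega) heq
    omega
  -- Step 6: 49 ∣ x₀
  have h49 : 49 ∣ x₀ := by
    by_contra h49
    obtain ⟨m, hm⟩ := h7
    have h7m : ¬ 7 ∣ m := fun ⟨k, hk⟩ => h49 ⟨k, by omega⟩
    have h36m : 36 ∣ m := by
      have : (36 : ℕ).Coprime 7 := by decide
      exact (Nat.Coprime.dvd_of_dvd_mul_left this (hm ▸ h36))
    have h2m : 2 ∣ m := dvd_trans (by norm_num) h36m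
    have h3m : 3 ∣ m := dvd_trans (by norm_num) h36m
    have heq : (6 * m).totient = x₀.totient := by
      rw [hm, tot_p_not_dvd (by norm_num) h7m, tot6 h2m h3m]
    have := huniq (6 * m) (by omega) heq
    omega
  have final : 36 * 49 ∣ x₀ :=
    Nat.Coprime.mul_dvd_of_dvd_of_dvd (by decide) h36 h49
  have : (2 : ℕ) ^ 2 * 3 ^ 2 * 7 ^ 2 = 36 * 49 := by norm_num
  rw [this]; exact final
end

section
/- If x₀ ≥ 2 is a positive integer such that φ(x) = φ(x₀) has x₀ as its unique positive solution, then 2²·3²·7²·43² divides x₀. -/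
lemma totp {p k : ℕ} (hp : p.Prime) (h : ¬ p ∣ k) :
    Nat.totient (p * k) = (p - 1) * Nat.totient k := by
  rw [Nat.totient_mul ((Nat.Prime.coprime_iff_not_dvd hp).2 h), Nat.totient_prime hp]

lemma tot2 (k : ℕ) (h : 2 ∣ k) : Nat.totient (2 * k) = 2 * Nat.totient k :=
  Nat.totient_mul_of_prime_of_dvd Nat.prime_two h

lemma tot6_s9 (k : ℕ) (h2 : 2 ∣ k) (h3 : 3 ∣ k) :
    Nat.totient (6 * k) = 6 * Nat.totient k := by
  have e : 6 * k = 2 * (3 * k) := by ring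
  rw [e, Nat.totient_mul_of_prime_of_dvd Nat.prime_two (Dvd.dvd.mul_left h2 3),
    Nat.totient_mul_of_prime_of_dvd Nat.prime_three h3]
  ring

lemma tot42 (k : ℕ) (h2 : 2 ∣ k) (h3 : 3 ∣ k) (h7 : 7 ∣ k) :
    Nat.totient (42 * k) = 42 * Nat.totient k := by
  have e : 42 * k = 6 * (7 * k) := by ring
  rw [e, tot6_s9 (7 * k) (Dvd.dvd.mul_left h2 7) (Dvd.dvd.mul_left h3 7),
    Nat.totient_mul_of_prime_of_dvd (by norm_num) h7]
  ring

set_option maxHeartbeats 1600000 in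
theorem stmt_9 (x₀ : ℕ) (hx : 2 ≤ x₀)
    (huniq : ∀ y : ℕ, 0 < y → Nat.totient y = Nat.totient x₀ → y = x₀) :
    2 ^ 2 * 3 ^ 2 * 7 ^ 2 * 43 ^ 2 ∣ x₀ := by
  have hx0 : 0 < x₀ := by omega
  have step : ∀ a b k : ℕ, 0 < k → 0 < b → a ≠ b → x₀ = a * k →
      Nat.totient (b * k) = Nat.totient (a * k) → False := by
    intro a b k hk hb hab hxk hφ
    have h1 : b * k = x₀ := huniq (b * k) (by positivity) (by rw [hφ, ← hxk])
    have h2 : b * k = a * k := h1.trans hxk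
    exact hab (Nat.eq_of_mul_eq_mul_right hk h2).symm
  -- 2 ∣ x₀
  have h2 : 2 ∣ x₀ := by
    by_contra h
    exact step 1 2 x₀ hx0 (by norm_num) (by norm_num) (one_mul x₀).symm
      (by rw [one_mul, totp Nat.prime_two h]; ring)
  -- 4 ∣ x₀
  have h4 : 4 ∣ x₀ := by
    by_contra h
    obtain ⟨k, hk⟩ := h2
    have hnk : ¬ 2 ∣ k := fun hd => h (by omega)
    exact step 2 1 k (by omega) (by norm_num) (by norm_num) hk
      (by rw [one_mul, totp Nat.prime_two hnk]; ring)
  -- 3 ∣ x₀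
  have h3 : 3 ∣ x₀ := by
    by_contra h
    obtain ⟨m, hm⟩ := h4
    have hk : x₀ = 2 * (2 * m) := by omega
    have hn3 : ¬ 3 ∣ (2 * m) := fun hd => h (by omega)
    exact step 2 3 (2 * m) (by omega) (by norm_num) (by norm_num) hk
      (by rw [totp Nat.prime_three hn3, tot2 _ ⟨m, rfl⟩])
  -- 9 ∣ x₀
  have h9 : 9 ∣ x₀ := by
    by_contra h
    obtain ⟨k, hk⟩ := h3
    have hn3 : ¬ 3 ∣ k := fun hd => h (by omega)
    have h2k : 2 ∣ k := by omega
    exact step 3 2 k (by omega) (by norm_num) (by norm_num) hk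
      (by rw [tot2 k h2k, totp Nat.prime_three hn3])
  -- 7 ∣ x₀
  have h36 : 36 ∣ x₀ := Nat.Coprime.mul_dvd_of_dvd_of_dvd (by norm_num) h4 h9
  have h7 : 7 ∣ x₀ := by
    by_contra h
    obtain ⟨m, hm⟩ := h36
    have hk : x₀ = 6 * (6 * m) := by omega
    have hn7 : ¬ 7 ∣ (6 * m) := fun hd => h (by omega)
    exact step 6 7 (6 * m) (by omega) (by norm_num) (by norm_num) hk
      (by rw [totp (by norm_num : Nat.Prime 7) hn7, tot6_s9 (6 * m) (by omega) (by omega)])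
  -- 49 ∣ x₀
  have h49 : 49 ∣ x₀ := by
    by_contra h
    obtain ⟨k, hk⟩ := h7
    have hn7 : ¬ 7 ∣ k := fun hd => h (by omega)
    have h2k : 2 ∣ k := by omega
    have h3k : 3 ∣ k := by omega
    exact step 7 6 k (by omega) (by norm_num) (by norm_num) hk
      (by rw [tot6_s9 k h2k h3k, totp (by norm_num : Nat.Prime 7) hn7])
  -- 43 ∣ x₀
  have h1764 : 1764 ∣ x₀ := by
    have h : 36 * 49 ∣ x₀ := Nat.Coprime.mul_dvd_of_dvd_of_dvd (by norm_num) h36 h49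
    simpa using h
  have h43 : 43 ∣ x₀ := by
    by_contra h
    obtain ⟨m, hm⟩ := h1764
    have hk : x₀ = 42 * (42 * m) := by omega
    have hn : ¬ 43 ∣ (42 * m) := fun hd => h (by omega)
    exact step 42 43 (42 * m) (by omega) (by norm_num) (by norm_num) hk
      (by rw [totp (by norm_num : Nat.Prime 43) hn,
        tot42 (42 * m) (by omega) (by omega) (by omega)])
  -- 43² ∣ x₀
  have h1849 : 1849 ∣ x₀ := by
    by_contra h
    obtain ⟨k, hk⟩ := h43
    have hn : ¬ 43 ∣ k := by
      rintro ⟨j, rfl⟩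
      exact h ⟨j, by rw [hk]; ring⟩
    have h2k : 2 ∣ k :=
      Nat.Coprime.dvd_of_dvd_mul_left (by norm_num) (show 2 ∣ 43 * k from hk ▸ h2)
    have h3k : 3 ∣ k :=
      Nat.Coprime.dvd_of_dvd_mul_left (by norm_num) (show 3 ∣ 43 * k from hk ▸ h3)
    have h7k : 7 ∣ k :=
      Nat.Coprime.dvd_of_dvd_mul_left (by norm_num) (show 7 ∣ 43 * k from hk ▸ h7)
    exact step 43 42 k (by omega) (by norm_num) (by norm_num) hk
      (by rw [tot42 k h2k h3k h7k, totp (by norm_num : Nat.Prime 43) hn])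
  have : 1764 * 1849 ∣ x₀ := Nat.Coprime.mul_dvd_of_dvd_of_dvd (by norm_num) h1764 h1849
  convert this using 1
  norm_num
end

section
/- If x₀ is a positive integer with 8 ∣ x₀ (i.e., 2³ divides x₀) and φ(x) = φ(x₀) has x₀ as its unique positive solution, then 25 divides x₀. -/
lemma tot4 (m : ℕ) (hm : 2 ∣ m) : Nat.totient (4 * m) = 4 * Nat.totient m := by
  have h1 : (4 : ℕ) * m = 2 * (2 * m) := by ring
  rw [h1, Nat.totient_mul_of_prime_of_dvd Nat.prime_two ⟨m, rfl⟩,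
      Nat.totient_mul_of_prime_of_dvd Nat.prime_two hm]
  ring

lemma tot5 (m : ℕ) (hm : ¬ 5 ∣ m) : Nat.totient (5 * m) = 4 * Nat.totient m := by
  rw [Nat.totient_mul (((by norm_num : Nat.Prime 5)).coprime_iff_not_dvd.mpr hm)]
  norm_num [Nat.totient_prime (by norm_num : Nat.Prime 5)]

theorem stmt_10 (x₀ : ℕ) (hx : 0 < x₀) (h8 : 2 ^ 3 ∣ x₀)
    (huniq : ∀ y : ℕ, 0 < y → Nat.totient y = Nat.totient x₀ → y = x₀) :
    25 ∣ x₀ := by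
  by_contra h25
  by_cases h5 : 5 ∣ x₀
  · -- x₀ = 5 n with 5 ∤ n; take y = 4 n
    obtain ⟨n, rfl⟩ := h5
    have hn8 : (8 : ℕ) ∣ n := (Nat.Coprime.dvd_of_dvd_mul_left (by norm_num : Nat.Coprime 8 5) (by simpa using h8))
    have h5n : ¬ 5 ∣ n := by
      intro h
      obtain ⟨k, rfl⟩ := h
      exact h25 ⟨k, by ring⟩
    have hn2 : (2 : ℕ) ∣ n := dvd_trans ⟨4, rfl⟩ hn8
    have hnpos : 0 < n := by omega
    have he : Nat.totient (4 * n) = Nat.totient (5 * n) := by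
      rw [tot4 n hn2, tot5 n h5n]
    have := huniq (4 * n) (by positivity) he
    omega
  · -- x₀ = 4 m with 2 ∣ m; take y = 5 m
    obtain ⟨k, rfl⟩ := h8
    have h2k : (2 : ℕ) ∣ 2 * k := ⟨k, rfl⟩
    have hx' : (2 : ℕ) ^ 3 * k = 4 * (2 * k) := by ring
    have h5m : ¬ 5 ∣ 2 * k := by
      intro h
      obtain ⟨j, hj⟩ := h; exact h5 ⟨2 * j, by omega⟩
    have hkpos : 0 < k := by omega
    have he : Nat.totient (5 * (2 * k)) = Nat.totient (2 ^ 3 * k) := by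
      rw [tot5 _ h5m, hx', tot4 _ h2k]
    have := huniq (5 * (2 * k)) (by positivity) he
    omega
end

section
/- For a prime p and a positive integer x with p ∥ x (p divides x exactly once), if every prime dividing p - 1 also divides x/p, then y = x·(p-1)/p satisfies φ(y) = φ(x) and y ≠ x. -/
lemma tot_aux : ∀ k m : ℕ, (∀ q : ℕ, q.Prime → q ∣ k → q ∣ m) →
    (k * m).totient = k * m.totient := by
  intro k
  induction k using Nat.strong_induction_on with
  | _ k ih =>
    intro m hq
    match k with
    | 0 => simp
    | 1 => simp
    | (n+2) =>
      have hqp : (n+2).minFac.Prime := Nat.minFac_prime (by omega)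
      obtain ⟨k', hk'⟩ := (n+2).minFac_dvd
      have hqm : (n+2).minFac ∣ m := hq _ hqp (n+2).minFac_dvd
      have h2 := hqp.two_le
      have hk'pos : 0 < k' := Nat.pos_of_ne_zero (fun h => by simp [h] at hk')
      have hk'lt : k' < n + 2 := by
        calc k' < 2 * k' := by omega
        _ ≤ (n + 2).minFac * k' := Nat.mul_le_mul_right _ h2
        _ = n + 2 := hk'.symm
      have hq' : ∀ q : ℕ, q.Prime → q ∣ k' → q ∣ m := fun q hqP hd =>
        hq q hqP (hk' ▸ Dvd.dvd.mul_left hd _)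
      rw [hk', mul_assoc, Nat.totient_mul_of_prime_of_dvd hqp (hqm.mul_left k'),
        ih k' hk'lt m hq', mul_assoc]

theorem stmt_13 (p x : ℕ) (hp : p.Prime) (hx : 0 < x) (hpx : p ∣ x)
    (hp2 : ¬ p ^ 2 ∣ x)
    (hq : ∀ q : ℕ, q.Prime → q ∣ (p - 1) → q ∣ x / p) :
    x * (p - 1) / p ≠ x ∧ Nat.totient (x * (p - 1) / p) = Nat.totient x := by
  obtain ⟨m, hm⟩ := hpx
  have hp0 : 0 < p := hp.pos
  have hmdiv : x / p = m := by rw [hm, Nat.mul_div_cancel_left _ hp0]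
  have hmpos : 0 < m := by
    rcases Nat.eq_zero_or_pos m with h | h
    · subst h; simp at hm; omega
    · exact h
  have hpm : ¬ p ∣ m := by
    intro ⟨c, hc⟩
    exact hp2 ⟨c, by rw [hm, hc]; ring⟩
  have hy : x * (p - 1) / p = m * (p - 1) := by
    rw [hm, mul_assoc, Nat.mul_div_cancel_left _ hp0]
  have hcop : Nat.Coprime p m := (Nat.Prime.coprime_iff_not_dvd hp).mpr hpm
  have htx : x.totient = (p - 1) * m.totient := by
    rw [hm, Nat.totient_mul hcop, Nat.totient_prime hp]
  have hty : (m * (p - 1)).totient = (p - 1) * m.totient := by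
    rw [mul_comm, tot_aux (p - 1) m (fun q hqP hd => hmdiv ▸ hq q hqP hd)]
  constructor
  · rw [hy, hm]
    intro h
    have hlt : m * (p - 1) < m * p :=
      Nat.mul_lt_mul_of_pos_left (by have := hp.two_le; omega) hmpos
    rw [h, mul_comm] at hlt
    exact lt_irrefl _ hlt
  · rw [hy, hty, htx]
end

section
/- The number of solutions x of φ(x) = n is at most ∏_{i=1}^{s}(a_i + 2), where p₁ < ⋯ < p_s are the primes ≤ n + 1 and a_i is the least natural number with p_i^{a_i} ≥ n. -/
theorem stmt_16 (n : ℕ) (hn : 2 ≤ n) :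
    {x : ℕ | 0 < x ∧ Nat.totient x = n}.ncard ≤
      ∏ p ∈ (Finset.range (n + 2)).filter Nat.Prime, (sInf {a : ℕ | n ≤ p ^ a} + 2) := by
  classical
  set s := (Finset.range (n + 2)).filter Nat.Prime with hs
  have hn0 : 0 < n := by omega
  -- key facts for a solution x and prime p dividing x
  have key : ∀ x : ℕ, 0 < x → Nat.totient x = n → ∀ p : ℕ, p.Prime → p ∣ x →
      p ∈ s ∧ x.factorization p ≤ sInf {a : ℕ | n ≤ p ^ a} + 1 := by
    intro x hx hφ p hp hpx
    set k := x.factorization p with hk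
    have hk1 : 1 ≤ k := (Nat.Prime.factorization_pos_of_dvd hp hx.ne' hpx)
    have hdvd : p ^ k ∣ x := Nat.ordProj_dvd x p
    have hφdvd : Nat.totient (p ^ k) ∣ n := hφ ▸ Nat.totient_dvd_of_dvd hdvd
    rw [Nat.totient_prime_pow hp hk1] at hφdvd
    have hp1 : (p - 1) ∣ n := (dvd_mul_left _ _).trans hφdvd
    have hpk : p ^ (k - 1) ∣ n := (dvd_mul_right _ _).trans hφdvd
    have hple : p - 1 ≤ n := Nat.le_of_dvd hn0 hp1
    have hpmem : p ∈ s := by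
      simp only [hs, Finset.mem_filter, Finset.mem_range]
      exact ⟨by have := hp.two_le; omega, hp⟩
    refine ⟨hpmem, ?_⟩
    -- sInf membership
    have hne : {a : ℕ | n ≤ p ^ a} ≠ ∅ := by
      refine Set.nonempty_iff_ne_empty.mp ⟨n, ?_⟩
      exact (Nat.lt_pow_self hp.one_lt : n < p ^ n).le
    have hInf : n ≤ p ^ (sInf {a : ℕ | n ≤ p ^ a}) :=
      Nat.sInf_mem (Set.nonempty_iff_ne_empty.mpr hne)
    by_contra hlt
    push_neg at hlt
    have h2 : sInf {a : ℕ | n ≤ p ^ a} + 1 ≤ k - 1 := by omega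
    have : p ^ (sInf {a : ℕ | n ≤ p ^ a} + 1) ≤ p ^ (k - 1) :=
      Nat.pow_le_pow_right hp.pos h2
    have hle : p ^ (k - 1) ≤ n := Nat.le_of_dvd hn0 hpk
    have : p * n ≤ n := by
      calc p * n ≤ p * p ^ (sInf {a : ℕ | n ≤ p ^ a}) := Nat.mul_le_mul_left _ hInf
        _ = p ^ (sInf {a : ℕ | n ≤ p ^ a} + 1) := by ring
        _ ≤ p ^ (k - 1) := this
        _ ≤ n := hle
    nlinarith [hp.two_le]
  -- injection into the product type
  set S := {x : ℕ | 0 < x ∧ Nat.totient x = n}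
  have hf : ∀ (x : S) (p : s), (x : ℕ).factorization p < sInf {a : ℕ | n ≤ (p:ℕ) ^ a} + 2 := by
    intro x p
    by_cases hdvd : (p : ℕ) ∣ (x : ℕ)
    · have hp : (p : ℕ).Prime := (Finset.mem_filter.mp p.2).2
      have := (key x x.2.1 x.2.2 p hp hdvd).2
      omega
    · rw [Nat.factorization_eq_zero_of_not_dvd hdvd]; omega
  let f : S → (∀ p : s, Fin (sInf {a : ℕ | n ≤ (p:ℕ) ^ a} + 2)) :=
    fun x p => ⟨(x : ℕ).factorization p, hf x p⟩
  have hinj : Function.Injective f := by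
    intro x y hxy
    have hfac : (x : ℕ).factorization = (y : ℕ).factorization := by
      ext p
      by_cases hp : p.Prime
      · by_cases hps : p ∈ s
        · have := congrFun hxy ⟨p, hps⟩
          simpa [f] using congrArg Fin.val this
        · have hx0 : (x : ℕ).factorization p = 0 := by
            rw [Nat.factorization_eq_zero_iff]
            by_contra h
            push_neg at h
            exact hps (key x x.2.1 x.2.2 p hp (h.2.1)).1
          have hy0 : (y : ℕ).factorization p = 0 := by
            rw [Nat.factorization_eq_zero_iff]
            by_contra h
            push_neg at h
            exact hps (key y y.2.1 y.2.2 p hp (h.2.1)).1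
          rw [hx0, hy0]
      · rw [Nat.factorization_eq_zero_of_not_prime _ hp,
          Nat.factorization_eq_zero_of_not_prime _ hp]
    have := Nat.factorization_inj (Set.mem_setOf.mpr x.2.1.ne') (Set.mem_setOf.mpr y.2.1.ne') hfac
    exact Subtype.ext this
  have hcard := Nat.card_le_card_of_injective f hinj
  rw [← Nat.card_coe_set_eq]
  refine hcard.trans_eq ?_
  rw [Nat.card_eq_fintype_card]
  simp [Fintype.card_pi]
  rw [← Finset.prod_attach s fun p => (sInf {a : ℕ | n ≤ p ^ a} + 2)]
end
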